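/- Let k < m be positive integers, and let A, B be n×m real matrices where A satisfies the spark condition for sparsity k. Suppose π is a map from k-element subsets of {1,...,m} to k-element subsets of {1,...,m} such that Span{A_S} = Span{B_{π(S)}} for all k-element subsets S. Then there exist a permutation matrix P and an invertible diagonal matrix D with A = B P D. -/

import Mathlib

open Finset

section Aux

variable {n m k : ℕ}

private lemma mulVec_eq' (A : Matrix (Fin n) (Fin m) ℝ) (x : Fin m → ℝ) :
    A.mulVec x = ∑ j, x j • A.transpose j := by
  ext i
  simp [Matrix.mulVec, dotProduct, Finset.sum_apply, mul_comm]

private lemma mem_span_cols {v : Fin m → (Fin n → ℝ)} {U : Finset (Fin m)} {x : Fin n → ℝ}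
    (hx : x ∈ Submodule.span ℝ (v '' ↑U)) :
    ∃ c : Fin m → ℝ, (∀ i ∉ U, c i = 0) ∧ x = ∑ i ∈ U, c i • v i := by
  induction hx using Submodule.span_induction with
  | mem y hy =>
      obtain ⟨i, hi, rfl⟩ := hy
      refine ⟨fun t => if t = i then 1 else 0, fun t ht => by
        simp only [ite_eq_right_iff]; rintro rfl; exact absurd hi ht, ?_⟩
      simp [ite_smul, Finset.sum_ite_eq']; simp [Finset.mem_coe.mp hi]
  | zero => exact ⟨0, by simp, by simp⟩
  | add y z _ _ hy hz =>
      obtain ⟨c, hc0, rfl⟩ := hy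
      obtain ⟨d, hd0, rfl⟩ := hz
      exact ⟨c + d, fun i hi => by simp [hc0 i hi, hd0 i hi],
        by simp [add_smul, Finset.sum_add_distrib]⟩
  | smul a y _ hy =>
      obtain ⟨c, hc0, rfl⟩ := hy
      exact ⟨a • c, fun i hi => by simp [hc0 i hi], by simp [Finset.smul_sum, mul_smul]⟩

private lemma span_mono_cols {v : Fin m → (Fin n → ℝ)} {U T : Finset (Fin m)} (h : U ⊆ T) :
    Submodule.span ℝ (v '' ↑U) ≤ Submodule.span ℝ (v '' ↑T) :=
  Submodule.span_mono (Set.image_mono (by exact_mod_cast h))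

private lemma sum_mem_span' {v : Fin m → (Fin n → ℝ)} {U : Finset (Fin m)} (c : Fin m → ℝ) :
    ∑ i ∈ U, c i • v i ∈ Submodule.span ℝ (v '' ↑U) :=
  Submodule.sum_mem _ fun i hi => Submodule.smul_mem _ _
    (Submodule.subset_span ⟨i, hi, rfl⟩)

section Spark
variable {A : Matrix (Fin n) (Fin m) ℝ}
  (hker : ∀ x : Fin m → ℝ, (Finset.univ.filter fun i => x i ≠ 0).card ≤ 2*k →
    A.mulVec x = 0 → x = 0)
include hker

private lemma not_mem_span_spark {R : Finset (Fin m)} {i : Fin m} (hi : i ∉ R)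
    (hcard : R.card + 1 ≤ 2*k) :
    A.transpose i ∉ Submodule.span ℝ (A.transpose '' ↑R) := by
  intro h
  obtain ⟨c, hc0, hrep⟩ := mem_span_cols h
  set x : Fin m → ℝ := fun t => (if t = i then 1 else 0) - (if t ∈ R then c t else 0) with hx
  have hx0 : A.mulVec x = 0 := by
    rw [mulVec_eq']
    have : ∀ t, x t • A.transpose t
        = (if t = i then (1:ℝ) else 0) • A.transpose t
          - (if t ∈ R then c t else 0) • A.transpose t := by
      intro t; rw [hx]; rw [sub_smul]
    simp only [this, Finset.sum_sub_distrib, ite_smul, zero_smul]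
    rw [Finset.sum_ite_eq' Finset.univ i, Finset.sum_ite_mem, Finset.univ_inter]
    simp [hrep]
  have hsupp : (Finset.univ.filter fun t => x t ≠ 0).card ≤ 2*k := by
    refine le_trans (le_trans (Finset.card_le_card ?_) (Finset.card_insert_le i R)) ?_
    · intro t ht
      simp only [Finset.mem_filter] at ht
      by_contra htm
      simp only [Finset.mem_insert, not_or] at htm
      exact ht.2 (by simp [hx, htm.1, htm.2])
    · omega
  have hz := hker x hsupp hx0
  have : x i = 0 := by rw [hz]; rfl
  simp [hx, hi] at this

private lemma span_inter_spark {U T : Finset (Fin m)} (hcard : U.card + T.card ≤ 2*k) :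
    Submodule.span ℝ (A.transpose '' ↑U) ⊓ Submodule.span ℝ (A.transpose '' ↑T)
      ≤ Submodule.span ℝ (A.transpose '' ↑(U ∩ T)) := by
  rintro x ⟨hU, hT⟩
  obtain ⟨c, hc0, hcrep⟩ := mem_span_cols hU
  obtain ⟨d, hd0, hdrep⟩ := mem_span_cols hT
  set e : Fin m → ℝ := fun t => (if t ∈ U then c t else 0) - (if t ∈ T then d t else 0) with he
  have he0 : A.mulVec e = 0 := by
    rw [mulVec_eq']
    have : ∀ t, e t • A.transpose t
        = (if t ∈ U then c t else 0) • A.transpose t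
          - (if t ∈ T then d t else 0) • A.transpose t := by
      intro t; rw [he]; rw [sub_smul]
    simp only [this, Finset.sum_sub_distrib, ite_smul, zero_smul]
    rw [Finset.sum_ite_mem, Finset.univ_inter, Finset.sum_ite_mem, Finset.univ_inter,
      ← hcrep, ← hdrep, sub_self]
  have hsupp : (Finset.univ.filter fun t => e t ≠ 0).card ≤ 2*k := by
    refine le_trans (le_trans (Finset.card_le_card ?_) (Finset.card_union_le U T)) hcard
    intro t ht
    simp only [Finset.mem_filter] at ht
    by_contra htm
    simp only [Finset.mem_union, not_or] at htm
    exact ht.2 (by simp [he, htm.1, htm.2])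
  have hez := hker e hsupp he0
  have hvan : ∀ t ∈ U, t ∉ T → c t = 0 := by
    intro t htU htT
    have : e t = 0 := by rw [hez]; rfl
    simpa [he, htU, htT] using this
  have : x = ∑ i ∈ U ∩ T, c i • A.transpose i := by
    rw [hcrep]
    refine (Finset.sum_subset Finset.inter_subset_left ?_).symm
    intro t htU htI
    have : c t = 0 := hvan t htU fun htT => htI (Finset.mem_inter.mpr ⟨htU, htT⟩)
    simp [this]
  rw [this]
  exact sum_mem_span' c

private lemma mem_span_inf {𝒮 : Finset (Finset (Fin m))} (h𝒮 : 𝒮.Nonempty)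
    (hcards : ∀ S ∈ 𝒮, S.card ≤ k) {x : Fin n → ℝ}
    (hx : ∀ S ∈ 𝒮, x ∈ Submodule.span ℝ (A.transpose '' ↑S)) :
    x ∈ Submodule.span ℝ (A.transpose '' ↑(𝒮.inf id)) := by
  induction h𝒮 using Finset.Nonempty.cons_induction with
  | singleton a => simpa using hx a (by simp)
  | cons a s ha hs ih =>
      have h1 : x ∈ Submodule.span ℝ (A.transpose '' ↑a) := hx a (Finset.mem_cons_self a s)
      have h2 : x ∈ Submodule.span ℝ (A.transpose '' ↑(s.inf id)) :=
        ih (fun S hS => hcards S (Finset.mem_cons.mpr (Or.inr hS)))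
          (fun S hS => hx S (Finset.mem_cons.mpr (Or.inr hS)))
      obtain ⟨S', hS'⟩ := hs
      have hinfcard : (s.inf id).card ≤ k :=
        le_trans (Finset.card_le_card (Finset.inf_le hS'))
          (hcards S' (Finset.mem_cons.mpr (Or.inr hS')))
      have hacard : a.card ≤ k := hcards a (Finset.mem_cons_self a s)
      have := span_inter_spark hker (U := a) (T := s.inf id) (by omega) ⟨h1, h2⟩
      rw [Finset.inf_cons]
      simpa [Finset.inf_eq_inter] using this

end Spark

private lemma swap_invol (a b : Fin m) (S : Finset (Fin m)) :
    (S.image (Equiv.swap a b)).image (Equiv.swap a b) = S := by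
  rw [Finset.image_image]
  have : (Equiv.swap a b : Fin m → Fin m) ∘ (Equiv.swap a b) = id := by
    funext t; simp [Equiv.swap_apply_self]
  rw [this, Finset.image_id]

private lemma swap_count (a b : Fin m) :
    ((powersetCard k (univ : Finset (Fin m))).filter fun T => a ∈ T).card =
    ((powersetCard k (univ : Finset (Fin m))).filter fun T => b ∈ T).card := by
  apply Finset.card_bij' (fun S _ => S.image (Equiv.swap a b))
    (fun T _ => T.image (Equiv.swap a b))
  case hi =>
    intro S hS
    simp only [Finset.mem_filter, Finset.mem_powersetCard_univ] at hS ⊢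
    refine ⟨by rw [Finset.card_image_of_injective _ (Equiv.injective _)]; exact hS.1, ?_⟩
    exact Finset.mem_image.mpr ⟨a, hS.2, Equiv.swap_apply_left a b⟩
  case hj =>
    intro T hT
    simp only [Finset.mem_filter, Finset.mem_powersetCard_univ] at hT ⊢
    refine ⟨by rw [Finset.card_image_of_injective _ (Equiv.injective _)]; exact hT.1, ?_⟩
    exact Finset.mem_image.mpr ⟨b, hT.2, Equiv.swap_apply_right a b⟩
  case left_inv => intro S _; exact swap_invol a b S
  case right_inv => intro T _; exact swap_invol a b T

private lemma exists_ksubset (hk : 0 < k) (hkm : k < m) (a b : Fin m) (hab : a ≠ b) :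
    ∃ S : Finset (Fin m), S.card = k ∧ a ∈ S ∧ b ∉ S := by
  obtain ⟨S, hsub, hsub2, hcard⟩ :=
    Finset.exists_subsuperset_card_eq (s := {a}) (t := (univ : Finset (Fin m)).erase b) (n := k)
      (by simp [Finset.mem_erase, hab]) (by simp; omega)
      (by rw [Finset.card_erase_of_mem (Finset.mem_univ b)]; simp; omega)
  exact ⟨S, hcard, hsub (Finset.mem_singleton_self a),
    fun hb => (Finset.mem_erase.mp (hsub2 hb)).1 rfl⟩

end Aux

/-- A vector is `k`-sparse if it has at most `k` nonzero entries. -/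
def KSparse {m : ℕ} (k : ℕ) (a : Fin m → ℝ) : Prop :=
  (Finset.univ.filter fun i => a i ≠ 0).card ≤ k

theorem stmt5 {n m k : ℕ} (hk : 0 < k) (hkm : k < m)
    (A B : Matrix (Fin n) (Fin m) ℝ)
    (hA : ∀ a₁ a₂ : Fin m → ℝ, KSparse k a₁ → KSparse k a₂ →
      A.mulVec a₁ = A.mulVec a₂ → a₁ = a₂)
    (π : Finset (Fin m) → Finset (Fin m))
    (hπcard : ∀ S : Finset (Fin m), S.card = k → (π S).card = k)
    (hspan : ∀ S : Finset (Fin m), S.card = k →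
      Submodule.span ℝ (A.transpose '' ↑S) = Submodule.span ℝ (B.transpose '' ↑(π S))) :
    ∃ (σ : Equiv.Perm (Fin m)) (d : Fin m → ℝ),
      (∀ i, d i ≠ 0) ∧ A = B * σ.permMatrix ℝ * Matrix.diagonal d := by
  classical
  -- Step 0 : the kernel property for supports of size ≤ 2k
  have hker : ∀ x : Fin m → ℝ, (Finset.univ.filter fun i => x i ≠ 0).card ≤ 2*k →
      A.mulVec x = 0 → x = 0 := by
    intro x hx hx0
    set s := Finset.univ.filter fun i => x i ≠ 0 with hs
    obtain ⟨S1, hS1s, hS1card⟩ := Finset.exists_subset_card_eq (s := s) (n := min k s.card) (min_le_right _ _)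
    set a1 : Fin m → ℝ := fun i => if i ∈ S1 then x i else 0 with ha1
    set a2 : Fin m → ℝ := fun i => if i ∈ S1 then 0 else -x i with ha2
    have hdiff : a1 - a2 = x := by
      funext i
      by_cases h : i ∈ S1 <;> simp [ha1, ha2, h]
    have hk1 : KSparse k a1 := by
      refine le_trans (Finset.card_le_card ?_) (by omega : S1.card ≤ k)
      intro t ht
      simp only [Finset.mem_filter, ha1] at ht
      by_contra htm
      exact ht.2 (by simp [htm])
    have hk2 : KSparse k a2 := by
      have hsub : (Finset.univ.filter fun i => a2 i ≠ 0) ⊆ s \ S1 := by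
        intro t ht
        have ht2 : a2 t ≠ 0 := (Finset.mem_filter.mp ht).2
        by_cases h : t ∈ S1
        · exact absurd (by simp [ha2, h]) ht2
        · refine Finset.mem_sdiff.mpr ⟨?_, h⟩
          simp only [hs, Finset.mem_filter, Finset.mem_univ, true_and]
          intro hx'
          exact ht2 (by simp [ha2, h, hx'])
      refine le_trans (Finset.card_le_card hsub) ?_
      rw [Finset.card_sdiff_of_subset hS1s, hS1card]
      have : s.card ≤ 2*k := hx
      omega
    have hmul : A.mulVec a1 = A.mulVec a2 := by
      have h1 : A.mulVec (a1 - a2) = 0 := by rw [hdiff]; exact hx0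
      rw [Matrix.mulVec_sub] at h1
      exact sub_eq_zero.mp h1
    have := hA a1 a2 hk1 hk2 hmul
    rw [← hdiff, this, sub_self]
  have hk2k : k + 1 ≤ 2*k := by omega
  -- columns-subset from span inclusion
  have hsubset_of_le : ∀ (S R : Finset (Fin m)), R.card ≤ k →
      Submodule.span ℝ (A.transpose '' ↑S) ≤ Submodule.span ℝ (A.transpose '' ↑R) → S ⊆ R := by
    intro S R hR hle i hiS
    by_contra hiR
    exact not_mem_span_spark hker hiR (by omega)
      (hle (Submodule.subset_span ⟨i, hiS, rfl⟩))
  -- π is injective on k-subsets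
  have hπinj : ∀ S T : Finset (Fin m), S.card = k → T.card = k → π S = π T → S = T := by
    intro S T hS hT h
    have h1 : Submodule.span ℝ (A.transpose '' ↑S) = Submodule.span ℝ (A.transpose '' ↑T) := by
      rw [hspan S hS, h, hspan T hT]
    exact Finset.Subset.antisymm (hsubset_of_le S T (le_of_eq hT) h1.le)
      (hsubset_of_le T S (le_of_eq hS) h1.ge)
  set 𝒦 := powersetCard k (univ : Finset (Fin m)) with h𝒦
  have hπmem : ∀ S ∈ 𝒦, π S ∈ 𝒦 := fun S hS =>
    Finset.mem_powersetCard_univ.mpr (hπcard S (Finset.mem_powersetCard_univ.mp hS))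
  have hπsurj : ∀ T ∈ 𝒦, ∃ S ∈ 𝒦, π S = T := by
    have himg : 𝒦.image π = 𝒦 := by
      apply Finset.eq_of_subset_of_card_le
      · intro T hT
        obtain ⟨S, hS, rfl⟩ := Finset.mem_image.mp hT
        exact hπmem S hS
      · rw [Finset.card_image_of_injOn]
        intro S hS T hT h
        exact hπinj _ _ (Finset.mem_powersetCard_univ.mp hS)
          (Finset.mem_powersetCard_univ.mp hT) h
    intro T hT
    rw [← himg] at hT
    obtain ⟨S, hS, h⟩ := Finset.mem_image.mp hT
    exact ⟨S, hS, h⟩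
  -- counting
  have hcount : ∀ l : Fin m,
      (𝒦.filter fun S => l ∈ π S).card = (𝒦.filter fun T => l ∈ T).card := by
    intro l
    apply Finset.card_bij (fun S _ => π S)
    · intro S hS
      rw [Finset.mem_filter] at hS ⊢
      exact ⟨hπmem S hS.1, hS.2⟩
    · intro S hS T hT h
      rw [Finset.mem_filter] at hS hT
      exact hπinj _ _ (Finset.mem_powersetCard_univ.mp hS.1)
        (Finset.mem_powersetCard_univ.mp hT.1) h
    · intro T hT
      rw [Finset.mem_filter] at hT
      obtain ⟨S, hS, rfl⟩ := hπsurj T hT.1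
      exact ⟨S, Finset.mem_filter.mpr ⟨hS, hT.2⟩, rfl⟩
  have h𝒮ne : ∀ l : Fin m, (𝒦.filter fun S => l ∈ π S).Nonempty := by
    intro l
    obtain ⟨T, hT1, _, hTcard⟩ :=
      Finset.exists_subsuperset_card_eq (s := ({l} : Finset (Fin m))) (t := univ) (n := k)
        (Finset.subset_univ _) (by simp; omega)
        (by simp [Finset.card_univ]; omega)
    obtain ⟨S, hS, rfl⟩ := hπsurj T (Finset.mem_powersetCard_univ.mpr hTcard)
    exact ⟨S, Finset.mem_filter.mpr ⟨hS, hT1 (Finset.mem_singleton_self l)⟩⟩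
  set Q : Fin m → Finset (Fin m) := fun l => (𝒦.filter fun S => l ∈ π S).inf id with hQdef
  have hQsub : ∀ l S, S.card = k → l ∈ π S → Q l ⊆ S := by
    intro l S hS hl
    have hmem : S ∈ 𝒦.filter fun S' => l ∈ π S' :=
      Finset.mem_filter.mpr ⟨Finset.mem_powersetCard_univ.mpr hS, hl⟩
    have h2 : (𝒦.filter fun S' => l ∈ π S').inf id ≤ id S := Finset.inf_le hmem
    exact h2
  have hBQ : ∀ l, B.transpose l ∈ Submodule.span ℝ (A.transpose '' ↑(Q l)) := by
    intro l
    apply mem_span_inf hker (h𝒮ne l)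
    · intro S hS
      exact le_of_eq (Finset.mem_powersetCard_univ.mp (Finset.mem_filter.mp hS).1)
    · intro S hS
      obtain ⟨hSk, hl⟩ := Finset.mem_filter.mp hS
      rw [hspan S (Finset.mem_powersetCard_univ.mp hSk)]
      exact Submodule.subset_span ⟨l, hl, rfl⟩
  have hQcard : ∀ l, (Q l).card ≤ 1 := by
    intro l
    by_contra h
    push_neg at h
    obtain ⟨j1, hj1, j2, hj2, hne⟩ := Finset.one_lt_card.mp h
    obtain ⟨S', hS'card, hj1S', hj2S'⟩ := exists_ksubset hk hkm j1 j2 hne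
    have hss : (𝒦.filter fun S => l ∈ π S) ⊂ (𝒦.filter fun S => j1 ∈ S) := by
      constructor
      · intro S hS
        obtain ⟨hSk, hl⟩ := Finset.mem_filter.mp hS
        exact Finset.mem_filter.mpr ⟨hSk,
          hQsub l S (Finset.mem_powersetCard_univ.mp hSk) hl hj1⟩
      · intro hsup
        have hS'mem : S' ∈ 𝒦.filter fun S => j1 ∈ S :=
          Finset.mem_filter.mpr ⟨Finset.mem_powersetCard_univ.mpr hS'card, hj1S'⟩
        have := Finset.mem_filter.mp (hsup hS'mem)
        exact hj2S' (hQsub l S' hS'card this.2 hj2)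
    have hlt := Finset.card_lt_card hss
    rw [hcount l, swap_count l j1] at hlt
    exact lt_irrefl _ hlt
  -- Lemma U : for every k-set S, the union of the Q's over π S recovers S
  have hLU : ∀ S : Finset (Fin m), S.card = k → (π S).biUnion Q = S := by
    intro S hScard
    set R := (π S).biUnion Q with hR
    have hRS : R ⊆ S := Finset.biUnion_subset.mpr fun t ht => hQsub t S hScard ht
    have hVle : Submodule.span ℝ (A.transpose '' ↑S) ≤ Submodule.span ℝ (A.transpose '' ↑R) := by
      rw [hspan S hScard]
      apply Submodule.span_le.mpr
      rintro y ⟨t, ht, rfl⟩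
      exact span_mono_cols (Finset.subset_biUnion_of_mem Q (Finset.mem_coe.mp ht)) (hBQ t)
    have hSR : S ⊆ R := hsubset_of_le S R (le_trans (Finset.card_le_card hRS) (le_of_eq hScard)) hVle
    exact Finset.Subset.antisymm hRS hSR
  have hQnonempty : ∀ l, (Q l).Nonempty := by
    intro l
    obtain ⟨S, hS⟩ := h𝒮ne l
    obtain ⟨hSk, hl⟩ := Finset.mem_filter.mp hS
    have hScard := Finset.mem_powersetCard_univ.mp hSk
    by_contra hemp
    rw [Finset.not_nonempty_iff_eq_empty] at hemp
    have hcards : S.card ≤ ∑ t ∈ π S, (Q t).card :=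
      calc S.card = ((π S).biUnion Q).card := by rw [hLU S hScard]
        _ ≤ ∑ t ∈ π S, (Q t).card := Finset.card_biUnion_le
    have hsum : (Q l).card + ∑ t ∈ (π S).erase l, (Q t).card = ∑ t ∈ π S, (Q t).card :=
      Finset.add_sum_erase (π S) (fun t => (Q t).card) hl
    have hbound : ∑ t ∈ (π S).erase l, (Q t).card ≤ ((π S).erase l).card * 1 := by
      simpa using Finset.sum_le_card_nsmul ((π S).erase l) (fun t => (Q t).card) 1
        (fun t _ => hQcard t)
    have hec : ((π S).erase l).card = k - 1 := by
      rw [Finset.card_erase_of_mem hl, hπcard S hScard]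
    rw [hemp] at hsum
    simp at hsum
    omega
  have hQone : ∀ l, ∃ a, Q l = {a} := fun l =>
    Finset.card_eq_one.mp (le_antisymm (hQcard l) (Finset.card_pos.mpr (hQnonempty l)))
  choose q hQq using hQone
  have hqS : ∀ l S, S.card = k → l ∈ π S → q l ∈ S := by
    intro l S hS hl
    exact hQsub l S hS hl (by rw [hQq l]; exact Finset.mem_singleton_self _)
  have himgq : ∀ S : Finset (Fin m), S.card = k → (π S).image q = S := by
    intro S hS
    have heq : (π S).biUnion Q = (π S).image q :=
      (Finset.biUnion_congr rfl fun t _ => hQq t).trans Finset.biUnion_singleton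
    exact heq.symm.trans (hLU S hS)
  -- q is injective
  have hqinj : Function.Injective q := by
    intro l1 l2 hql
    by_contra hne
    by_cases hcommon : ∃ S : Finset (Fin m), S.card = k ∧ l1 ∈ π S ∧ l2 ∈ π S
    · obtain ⟨S, hSc, h1, h2⟩ := hcommon
      have hsub : (π S).image q ⊆ ((π S).erase l1).image q := by
        intro y hy
        obtain ⟨t, ht, rfl⟩ := Finset.mem_image.mp hy
        by_cases htl : t = l1
        · exact Finset.mem_image.mpr ⟨l2, Finset.mem_erase.mpr ⟨fun h => hne h.symm, h2⟩,
            (htl ▸ hql).symm⟩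
        · exact Finset.mem_image.mpr ⟨t, Finset.mem_erase.mpr ⟨htl, ht⟩, rfl⟩
      have hc1 : S.card ≤ ((π S).erase l1).card :=
        calc S.card = ((π S).image q).card := by rw [himgq S hSc]
          _ ≤ (((π S).erase l1).image q).card := Finset.card_le_card hsub
          _ ≤ ((π S).erase l1).card := Finset.card_image_le
      rw [Finset.card_erase_of_mem h1, hπcard S hSc, hSc] at hc1
      omega
    · push_neg at hcommon
      set F := 𝒦.filter fun S => q l1 ∈ S with hF
      have hsub1 : (𝒦.filter fun S => l1 ∈ π S) ⊆ F := by
        intro S hS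
        obtain ⟨hSk, hl⟩ := Finset.mem_filter.mp hS
        exact Finset.mem_filter.mpr ⟨hSk, hqS l1 S (Finset.mem_powersetCard_univ.mp hSk) hl⟩
      have hsub2 : (𝒦.filter fun S => l2 ∈ π S) ⊆ F := by
        intro S hS
        obtain ⟨hSk, hl⟩ := Finset.mem_filter.mp hS
        have := hqS l2 S (Finset.mem_powersetCard_univ.mp hSk) hl
        rw [← hql] at this
        exact Finset.mem_filter.mpr ⟨hSk, this⟩
      have hdisj : Disjoint (𝒦.filter fun S => l1 ∈ π S) (𝒦.filter fun S => l2 ∈ π S) := by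
        rw [Finset.disjoint_left]
        intro S hS1 hS2
        obtain ⟨hSk, hl1'⟩ := Finset.mem_filter.mp hS1
        obtain ⟨_, hl2'⟩ := Finset.mem_filter.mp hS2
        exact hcommon S (Finset.mem_powersetCard_univ.mp hSk) hl1' hl2'
      have hunion : (𝒦.filter fun S => l1 ∈ π S) ∪ (𝒦.filter fun S => l2 ∈ π S) ⊆ F :=
        Finset.union_subset hsub1 hsub2
      have hcardsum := Finset.card_union_of_disjoint hdisj
      have hle : (𝒦.filter fun S => l1 ∈ π S).card + (𝒦.filter fun S => l2 ∈ π S).card ≤ F.card := by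
        rw [← hcardsum]; exact Finset.card_le_card hunion
      have e1 : (𝒦.filter fun S => l1 ∈ π S).card = F.card := by
        rw [hcount l1, hF]; exact swap_count l1 (q l1)
      have e2 : (𝒦.filter fun S => l2 ∈ π S).card = F.card := by
        rw [hcount l2, hF]; exact swap_count l2 (q l1)
      have hpos : 0 < (𝒦.filter fun S => l1 ∈ π S).card := Finset.card_pos.mpr (h𝒮ne l1)
      omega
  have hqbij : Function.Bijective q := Finite.injective_iff_bijective.mp hqinj
  set σ : Equiv.Perm (Fin m) := Equiv.ofBijective q hqbij with hσ
  -- coefficients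
  have hcoef : ∀ l, ∃ c : ℝ, B.transpose l = c • A.transpose (q l) := by
    intro l
    have := hBQ l
    rw [hQq l] at this
    have himg : (A.transpose '' ↑({q l} : Finset (Fin m))) = {A.transpose (q l)} := by
      simp only [Finset.coe_singleton]; exact Set.image_singleton
    rw [himg] at this
    exact (Submodule.mem_span_singleton.mp this).imp fun c hc => hc.symm
  choose c hc using hcoef
  have hc0 : ∀ l, c l ≠ 0 := by
    intro l h0
    have hBl : B.transpose l = 0 := by rw [hc l, h0, zero_smul]
    obtain ⟨S, hS⟩ := h𝒮ne l
    obtain ⟨hSk, hl⟩ := Finset.mem_filter.mp hS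
    have hScard := Finset.mem_powersetCard_univ.mp hSk
    set R' := ((π S).erase l).image q with hR'
    have hR'S : R' ⊆ S := by
      intro y hy
      obtain ⟨t, ht, rfl⟩ := Finset.mem_image.mp hy
      exact hqS t S hScard (Finset.mem_of_mem_erase ht)
    have hVle : Submodule.span ℝ (A.transpose '' ↑S) ≤ Submodule.span ℝ (A.transpose '' ↑R') := by
      rw [hspan S hScard]
      apply Submodule.span_le.mpr
      rintro y ⟨t, ht, rfl⟩
      by_cases htl : t = l
      · rw [htl, hBl]; exact Submodule.zero_mem _
      · rw [hc t]
        refine Submodule.smul_mem _ _ (Submodule.subset_span ?_)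
        exact ⟨q t, Finset.mem_coe.mpr (Finset.mem_image.mpr
          ⟨t, Finset.mem_erase.mpr ⟨htl, Finset.mem_coe.mp ht⟩, rfl⟩), rfl⟩
    have hSR' : S ⊆ R' :=
      hsubset_of_le S R' (le_trans Finset.card_image_le (by
        rw [Finset.card_erase_of_mem hl, hπcard S hScard]; omega)) hVle
    have := Finset.card_le_card hSR'
    have hR'card : R'.card ≤ k - 1 := le_trans Finset.card_image_le (by
      rw [Finset.card_erase_of_mem hl, hπcard S hScard])
    omega
  refine ⟨σ, fun j => (c (σ.symm j))⁻¹, fun j => inv_ne_zero (hc0 _), ?_⟩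
  have hperm : B * σ.permMatrix ℝ = B.submatrix id σ.symm :=
    PEquiv.mul_toMatrix_toPEquiv B σ
  rw [hperm]
  ext i j
  rw [Matrix.mul_diagonal]
  have hqσ : q (σ.symm j) = j := σ.apply_symm_apply j
  have hcol := hc (σ.symm j)
  have hB : B i (σ.symm j) = c (σ.symm j) * A i j := by
    have := congrFun hcol i
    simpa [Matrix.transpose_apply, hqσ] using this
  rw [Matrix.submatrix_apply, id, hB]
  field_simp [hc0 (σ.symm j)]
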